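/- If (Ω, Σ, M) is a POVM whose total variation with respect to the operator norm is σ-finite, then for every x ∈ H the vector measure E ↦ M(E)x has σ-finite total variation, and in the Radon–Nikodym decomposition M(E) = ∫_E Q(t) dμ(t) with μ the operator-norm total variation measure of M, the operators Q(t) are bounded with ‖Q(t)‖ ≤ 1 for μ-a.e. t. -/

import Mathlib

open MeasureTheory
open scoped InnerProductSpace ENNReal

/-- A positive operator-valued measure (POVM). -/
structure POVM (Ω : Type*) [MeasurableSpace Ω] (H : Type*)
    [NormedAddCommGroup H] [InnerProductSpace ℂ H] [CompleteSpace H] where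
  toFun : Set Ω → H →L[ℂ] H
  isPositive : ∀ E : Set Ω, MeasurableSet E → (toFun E).IsPositive
  empty : toFun ∅ = 0
  weakly_additive : ∀ E : ℕ → Set Ω, (∀ i, MeasurableSet (E i)) →
    Pairwise (Function.onFun Disjoint E) → ∀ x y : H,
      HasSum (fun i => ⟪toFun (E i) x, y⟫_ℂ) ⟪toFun (⋃ i, E i) x, y⟫_ℂ

/-- The total variation of a vector-valued set function. -/
noncomputable def totalVar {Ω : Type*} [MeasurableSpace Ω] {X : Type*}
    [SeminormedAddCommGroup X] (ν : Set Ω → X) (E : Set Ω) : ℝ≥0∞ :=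
  ⨆ F : {F : ℕ → Set Ω // (∀ i, MeasurableSet (F i)) ∧
      Pairwise (Function.onFun Disjoint F) ∧ (⋃ i, F i) = E},
    ∑' i, (‖ν (F.1 i)‖₊ : ℝ≥0∞)

section Aux

variable {Ω : Type*} [MeasurableSpace Ω] {X : Type*} [SeminormedAddCommGroup X]

lemma tsum_le_totalVar (ν : Set Ω → X) {E : Set Ω} (F : ℕ → Set Ω)
    (hF : (∀ i, MeasurableSet (F i)) ∧ Pairwise (Function.onFun Disjoint F) ∧ (⋃ i, F i) = E) :
    ∑' i, (‖ν (F i)‖₊ : ℝ≥0∞) ≤ totalVar ν E :=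
  le_iSup (fun (G : {F : ℕ → Set Ω // (∀ i, MeasurableSet (F i)) ∧
      Pairwise (Function.onFun Disjoint F) ∧ (⋃ i, F i) = E}) => ∑' i, (‖ν (G.1 i)‖₊ : ℝ≥0∞))
    ⟨F, hF⟩

lemma nnnorm_le_totalVar (ν : Set Ω → X) {Z : Set Ω} (hZ : MeasurableSet Z) :
    (‖ν Z‖₊ : ℝ≥0∞) ≤ totalVar ν Z := by
  classical
  have h := tsum_le_totalVar ν (E := Z) (fun i => if i = 0 then Z else ∅) ?_
  · refine le_trans ?_ h
    have := ENNReal.le_tsum (f := fun i => (‖ν (if i = 0 then Z else (∅ : Set Ω))‖₊ : ℝ≥0∞)) 0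
    simpa using this
  · refine ⟨fun i => by by_cases h : i = 0 <;> simp [h, hZ], ?_, ?_⟩
    · intro i j hij
      by_cases hi : i = 0 <;> by_cases hj : j = 0 <;>
        simp_all [Function.onFun, Set.disjoint_iff_inter_eq_empty]
    · ext t; simp
end Aux

section Aux2

variable {Ω : Type*} [MeasurableSpace Ω]

lemma exists_near_iSup {ι : Sort*} [Nonempty ι] (g : ι → ℝ≥0∞) (k : ℕ)
    (hfin : (⨆ i, g i) ≠ ⊤) : ∃ i, (⨆ i, g i) ≤ g i + ((k : ℝ≥0∞) + 1)⁻¹ := by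
  by_cases hm : (⨆ i, g i) = 0
  · exact ⟨Classical.arbitrary ι, by simp [hm]⟩
  · have hinv : ((k : ℝ≥0∞) + 1)⁻¹ ≠ 0 := by simp
    obtain ⟨i, hi⟩ := lt_iSup_iff.mp (ENNReal.sub_lt_self hfin hm hinv)
    refine ⟨i, ?_⟩
    have h1 : (⨆ i, g i) ≤ (⨆ i, g i) - ((k : ℝ≥0∞) + 1)⁻¹ + ((k : ℝ≥0∞) + 1)⁻¹ :=
      le_tsub_add
    exact h1.trans (add_le_add_left hi.le _)

/-- Exhaustion by sets of integrability. -/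
lemma exists_integrable_exhaustion {μ : Measure Ω} {E : Set Ω} (hE : MeasurableSet E)
    (hEfin : μ E ≠ ⊤) (f : Ω → ℂ) :
    ∃ T : ℕ → Set Ω, (∀ k, MeasurableSet (T k)) ∧ (∀ k, T k ⊆ E) ∧
      (∀ k, IntegrableOn f (T k) μ) ∧
      ∀ S, MeasurableSet S → S ⊆ E → Disjoint S (⋃ k, T k) → IntegrableOn f S μ → μ S = 0 := by
  classical
  set ι := {S : Set Ω // MeasurableSet S ∧ S ⊆ E ∧ IntegrableOn f S μ} with hι
  haveI : Nonempty ι := ⟨⟨∅, MeasurableSet.empty, Set.empty_subset E, integrableOn_empty⟩⟩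
  set m := ⨆ S : ι, μ S.1 with hm
  have hmle : m ≤ μ E := iSup_le fun S => measure_mono S.2.2.1
  have hmfin : m ≠ ⊤ := fun h => hEfin (top_le_iff.mp (h ▸ hmle))
  have hsel : ∀ k : ℕ, ∃ S : ι, m ≤ μ S.1 + ((k : ℝ≥0∞) + 1)⁻¹ :=
    fun k => exists_near_iSup (fun S : ι => μ S.1) k hmfin
  choose T hT using hsel
  refine ⟨fun k => (T k).1, fun k => (T k).2.1, fun k => (T k).2.2.1, fun k => (T k).2.2.2, ?_⟩
  intro S hS hSE hdisj hint
  have hTfin : ∀ k, μ (T k).1 ≠ ⊤ := fun k =>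
    (lt_of_le_of_lt (measure_mono (T k).2.2.1) (lt_top_iff_ne_top.mpr hEfin)).ne
  have hle : ∀ k : ℕ, μ S ≤ ((k : ℝ≥0∞) + 1)⁻¹ := by
    intro k
    have hdk : Disjoint (T k).1 S :=
      (hdisj.mono_right (Set.subset_iUnion (fun k => (T k).1) k)).symm
    have hu : MeasurableSet ((T k).1 ∪ S) ∧ ((T k).1 ∪ S) ⊆ E ∧ IntegrableOn f ((T k).1 ∪ S) μ :=
      ⟨(T k).2.1.union hS, Set.union_subset (T k).2.2.1 hSE, (T k).2.2.2.union hint⟩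
    have h1 : μ ((T k).1 ∪ S) ≤ m := le_iSup (fun S : ι => μ S.1) ⟨_, hu⟩
    rw [measure_union hdk hS] at h1
    have h2 := (hT k).trans (add_le_add_left (le_add_right le_rfl : μ (T k).1 ≤ μ (T k).1 + μ S) _)
    -- m ≤ μ Tk + μ S + inv ; and μ Tk + μ S ≤ m
    have h3 : μ (T k).1 + μ S ≤ μ (T k).1 + ((k : ℝ≥0∞) + 1)⁻¹ := h1.trans (hT k)
    exact (ENNReal.add_le_add_iff_left (hTfin k)).mp h3
  by_contra hne
  obtain ⟨n, hn⟩ := ENNReal.exists_inv_nat_lt hne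
  have hSfin : μ S ≠ ⊤ := (lt_of_le_of_lt (measure_mono hSE) (lt_top_iff_ne_top.mpr hEfin)).ne
  rcases n with _ | n
  · simp at hn
  · have := hle n
    rw [show ((n : ℝ≥0∞) + 1) = ((n + 1 : ℕ) : ℝ≥0∞) by push_cast; ring] at this
    exact absurd (hn.trans_le this) (lt_irrefl _)

/-- Generic exhaustion for σ-closed hereditary predicates. -/
lemma exhaust {μ : Measure Ω} {R : Set Ω} (hR : MeasurableSet R) (hfin : μ R ≠ ⊤)
    (P : Set Ω → Prop)
    (hPmeas : ∀ S, P S → MeasurableSet S)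
    (hPsub : ∀ S, P S → S ⊆ R)
    (hPempty : P ∅)
    (hPunion : ∀ U : ℕ → Set Ω, (∀ k, P (U k)) → P (⋃ k, U k))
    (hpos : ∀ S, MeasurableSet S → S ⊆ R → μ S ≠ 0 → ∃ S₀, P S₀ ∧ S₀ ⊆ S ∧ μ S₀ ≠ 0) :
    ∃ U, P U ∧ μ (R \ U) = 0 := by
  classical
  set ι := {S : Set Ω // P S} with hι
  haveI : Nonempty ι := ⟨⟨∅, hPempty⟩⟩
  set m := ⨆ S : ι, μ S.1 with hm
  have hmle : m ≤ μ R := iSup_le fun S => measure_mono (hPsub _ S.2)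
  have hmfin : m ≠ ⊤ := fun h => hfin (top_le_iff.mp (h ▸ hmle))
  have hsel : ∀ k : ℕ, ∃ S : ι, m ≤ μ S.1 + ((k : ℝ≥0∞) + 1)⁻¹ :=
    fun k => exists_near_iSup (fun S : ι => μ S.1) k hmfin
  choose T hT using hsel
  set U := ⋃ k, (T k).1 with hU
  have hPU : P U := hPunion _ fun k => (T k).2
  refine ⟨U, hPU, ?_⟩
  have hUm : μ U ≤ m := le_iSup (fun S : ι => μ S.1) ⟨U, hPU⟩
  have hmU : m ≤ μ U := by
    refine ENNReal.le_of_forall_pos_le_add fun ε hε hUfin => ?_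
    obtain ⟨n, hn⟩ := ENNReal.exists_inv_nat_lt (a := (ε : ℝ≥0∞)) (by simpa using hε.ne')
    have h1 : ((n : ℝ≥0∞) + 1)⁻¹ ≤ (ε : ℝ≥0∞) := by
      refine le_trans ?_ hn.le
      exact ENNReal.inv_le_inv.mpr (le_add_right le_rfl)
    calc m ≤ μ (T n).1 + ((n : ℝ≥0∞) + 1)⁻¹ := hT n
      _ ≤ μ U + (ε : ℝ≥0∞) :=
        add_le_add (measure_mono (Set.subset_iUnion (fun k => (T k).1) n)) h1
  by_contra hne
  obtain ⟨S₀, hPS₀, hS₀sub, hS₀ne⟩ :=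
    hpos (R \ U) (hR.diff (hPmeas _ hPU)) Set.diff_subset hne
  have hP2 : P (U ∪ S₀) := by
    have := hPunion (fun k => if k = 0 then U else S₀) (fun k => by by_cases h : k = 0 <;> simp [h, hPU, hPS₀])
    convert this using 1
    ext t
    simp only [Set.mem_union, Set.mem_iUnion]
    constructor
    · rintro (h | h)
      · exact ⟨0, by simp [h]⟩
      · exact ⟨1, by simp [h]⟩
    · rintro ⟨k, hk⟩
      by_cases h : k = 0
      · simp [h] at hk; exact Or.inl hk
      · simp [h] at hk; exact Or.inr hk
  have hdisj : Disjoint U S₀ := Set.disjoint_of_subset_right hS₀sub Set.disjoint_sdiff_right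
  have h1 : μ (U ∪ S₀) ≤ m := le_iSup (fun S : ι => μ S.1) ⟨_, hP2⟩
  rw [measure_union hdisj (hPmeas _ hPS₀)] at h1
  have h2 : m < m + μ S₀ := ENNReal.lt_add_right hmfin hS₀ne
  have h3 : m + μ S₀ ≤ μ U + μ S₀ := add_le_add_left hmU _
  exact absurd ((h2.trans_le h3).trans_le h1) (lt_irrefl m)

end Aux2

section Aux3

lemma solve2 {α β b c : ℂ} (hα : α ≠ 0) (hβ : β ≠ 0) (hαβ : α ≠ β)
    (h1 : α * b + α ^ 2 * c = 0) (h2 : β * b + β ^ 2 * c = 0) : c = 0 := by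
  have h3 : (α * β * (α - β)) * c = β * (α * b + α ^ 2 * c) - α * (β * b + β ^ 2 * c) := by ring
  rw [h1, h2] at h3
  simp only [mul_zero, sub_zero] at h3
  have hne : α * β * (α - β) ≠ 0 := mul_ne_zero (mul_ne_zero hα hβ) (sub_ne_zero.mpr hαβ)
  exact (mul_eq_zero.mp h3).resolve_left hne

lemma lagrange0 {a b c : ℂ} (hab : a ≠ b) (hac : a ≠ c) (hbc : b ≠ c) (p q r : ℂ) :
    p = (b * c / ((a - b) * (a - c))) * (p + a * q + a ^ 2 * r)
      + (a * c / ((b - a) * (b - c))) * (p + b * q + b ^ 2 * r)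
      + (a * b / ((c - a) * (c - b))) * (p + c * q + c ^ 2 * r) := by
  have h1 : a - b ≠ 0 := sub_ne_zero.mpr hab
  have h2 : a - c ≠ 0 := sub_ne_zero.mpr hac
  have h3 : b - a ≠ 0 := sub_ne_zero.mpr hab.symm
  have h4 : b - c ≠ 0 := sub_ne_zero.mpr hbc
  have h5 : c - a ≠ 0 := sub_ne_zero.mpr hac.symm
  have h6 : c - b ≠ 0 := sub_ne_zero.mpr hbc.symm
  field_simp
  ring

variable {H : Type*} [NormedAddCommGroup H] [InnerProductSpace ℂ H]

lemma exp_inner (α : ℝ) (A B v y : H) :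
    ⟪A + (α : ℂ) • B, v + (α : ℂ) • y⟫_ℂ
      = ⟪A, v⟫_ℂ + (α : ℂ) * (⟪B, v⟫_ℂ + ⟪A, y⟫_ℂ) + (α : ℂ) ^ 2 * ⟪B, y⟫_ℂ := by
  simp only [inner_add_left, inner_add_right, inner_smul_left, inner_smul_right,
    Complex.conj_ofReal]
  ring

end Aux3

section Povm

variable {Ω : Type*} [MeasurableSpace Ω] {H : Type*} [NormedAddCommGroup H]
  [InnerProductSpace ℂ H] [CompleteSpace H]

lemma POVM.nnnorm_le (M : POVM Ω H) {μ : Measure Ω}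
    (hμ : ∀ E : Set Ω, MeasurableSet E → μ E = totalVar M.toFun E)
    {Z : Set Ω} (hZ : MeasurableSet Z) : (‖M.toFun Z‖₊ : ℝ≥0∞) ≤ μ Z := by
  rw [hμ Z hZ]; exact nnnorm_le_totalVar M.toFun hZ

lemma POVM.zero_of_null (M : POVM Ω H) {μ : Measure Ω}
    (hμ : ∀ E : Set Ω, MeasurableSet E → μ E = totalVar M.toFun E)
    {Z : Set Ω} (hZ : MeasurableSet Z) (h0 : μ Z = 0) : M.toFun Z = 0 := by
  have := M.nnnorm_le hμ hZ
  rw [h0, nonpos_iff_eq_zero] at this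
  simpa using this

lemma POVM.norm_le (M : POVM Ω H) {μ : Measure Ω}
    (hμ : ∀ E : Set Ω, MeasurableSet E → μ E = totalVar M.toFun E)
    {Z : Set Ω} (hZ : MeasurableSet Z) (hfin : μ Z ≠ ⊤) : ‖M.toFun Z‖ ≤ (μ Z).toReal := by
  have h := M.nnnorm_le hμ hZ
  have := ENNReal.toReal_mono hfin h
  simpa using this

lemma POVM.sadd (M : POVM Ω H) {A B : Set Ω} (hA : MeasurableSet A) (hB : MeasurableSet B)
    (hd : Disjoint A B) (x y : H) :
    ⟪M.toFun (A ∪ B) x, y⟫_ℂ = ⟪M.toFun A x, y⟫_ℂ + ⟪M.toFun B x, y⟫_ℂ := by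
  classical
  set F : ℕ → Set Ω := fun k => if k = 0 then A else if k = 1 then B else ∅ with hF
  have hmeas : ∀ k, MeasurableSet (F k) := by
    intro k; by_cases h0 : k = 0
    · simp [hF, h0, hA]
    · by_cases h1 : k = 1 <;> simp [hF, h0, h1, hB]
  have hdisj : Pairwise (Function.onFun Disjoint F) := by
    intro i j hij
    simp only [Function.onFun, hF]
    split_ifs with g1 g2 g3 g4 g5 <;>
      first
        | exact absurd (by omega : i = j) hij
        | exact hd
        | exact hd.symm
        | exact Set.disjoint_empty _
        | exact Set.empty_disjoint _
  have hU : (⋃ k, F k) = A ∪ B := by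
    ext t
    simp only [Set.mem_iUnion, Set.mem_union, hF]
    constructor
    · rintro ⟨k, hk⟩
      split_ifs at hk with g1 g2
      · exact Or.inl hk
      · exact Or.inr hk
      · exact absurd hk (Set.notMem_empty t)
    · rintro (h | h)
      · exact ⟨0, by simp [h]⟩
      · exact ⟨1, by simp [h]⟩
  have hsum := M.weakly_additive F hmeas hdisj x y
  rw [hU] at hsum
  have h2 : HasSum (fun k => ⟪M.toFun (F k) x, y⟫_ℂ)
      (⟪M.toFun A x, y⟫_ℂ + ⟪M.toFun B x, y⟫_ℂ) := by
    have ha := hasSum_ite_eq 0 (⟪M.toFun A x, y⟫_ℂ)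
    have hb := hasSum_ite_eq 1 (⟪M.toFun B x, y⟫_ℂ)
    have hab := ha.add hb
    convert hab using 1
    funext k
    by_cases h0 : k = 0
    · simp [hF, h0]
    · by_cases h1 : k = 1 <;> simp [hF, h0, h1, M.empty]
  exact hsum.unique h2

end Povm

section Povm2

variable {Ω : Type*} [MeasurableSpace Ω] {H : Type*} [NormedAddCommGroup H]
  [InnerProductSpace ℂ H] [CompleteSpace H]
  {M : POVM Ω H} {μ : Measure Ω} {Q : Ω → (H →ₗ[ℂ] H)}

/-- Junk-value lemma: if integrability of the fibre integrand on `S` would force `μ S = 0`,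
then the pairing of `M S` vanishes. -/
lemma junk_zero
    (hQ : ∀ E : Set Ω, MeasurableSet E → ∀ x y : H,
      ⟪M.toFun E x, y⟫_ℂ = ∫ t in E, ⟪Q t x, y⟫_ℂ ∂μ)
    {S : Set Ω} (hS : MeasurableSet S) (a b : H)
    (h : IntegrableOn (fun t => ⟪Q t a, b⟫_ℂ) S μ → μ S = 0) :
    ⟪M.toFun S a, b⟫_ℂ = 0 := by
  rw [hQ S hS a b]
  by_cases hint : IntegrableOn (fun t => ⟪Q t a, b⟫_ℂ) S μ
  · rw [Measure.restrict_eq_zero.mpr (h hint)]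
    exact integral_zero_measure _
  · exact integral_undef hint

/-- On a set where the integrand is integrable, the real part is a.e. bounded. -/
lemma good_bound
    (hμ : ∀ E : Set Ω, MeasurableSet E → μ E = totalVar M.toFun E)
    (hQ : ∀ E : Set Ω, MeasurableSet E → ∀ x y : H,
      ⟪M.toFun E x, y⟫_ℂ = ∫ t in E, ⟪Q t x, y⟫_ℂ ∂μ)
    {S : Set Ω} (hS : MeasurableSet S) (hfin : μ S ≠ ⊤) (u v : H)
    (hint : IntegrableOn (fun t => ⟪Q t u, v⟫_ℂ) S μ) :
    ∀ᵐ t ∂μ.restrict S, (⟪Q t u, v⟫_ℂ).re ≤ ‖u‖ * ‖v‖ := by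
  haveI : IsFiniteMeasure (μ.restrict S) :=
    ⟨by rwa [Measure.restrict_apply_univ, lt_top_iff_ne_top]⟩
  set f : Ω → ℂ := fun t => ⟪Q t u, v⟫_ℂ with hf
  have hre : Integrable (fun t => (f t).re) (μ.restrict S) := by
    simpa using hint.re
  have hgint : Integrable (fun t => ‖u‖ * ‖v‖ - (f t).re) (μ.restrict S) :=
    (integrable_const _).sub hre
  have key : ∀ s, MeasurableSet s → μ.restrict S s < ⊤ →
      0 ≤ ∫ t in s, (‖u‖ * ‖v‖ - (f t).re) ∂(μ.restrict S) := by
    intro s hs _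
    have hrr : (μ.restrict S).restrict s = μ.restrict (s ∩ S) :=
      Measure.restrict_restrict hs
    have hintr : Integrable (fun t => (f t).re) ((μ.restrict S).restrict s) :=
      hre.mono_measure Measure.restrict_le_self
    rw [integral_sub (integrable_const _) hintr]
    have h1 : ∫ t in s, (f t).re ∂(μ.restrict S) = (∫ t in (s ∩ S), f t ∂μ).re := by
      rw [hrr]
      rw [← RCLike.re_eq_complex_re]
      exact integral_re (hint.mono_set Set.inter_subset_right)
    have h2 : (∫ t in (s ∩ S), f t ∂μ) = ⟪M.toFun (s ∩ S) u, v⟫_ℂ :=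
      (hQ (s ∩ S) (hs.inter hS) u v).symm
    have hfin' : μ (s ∩ S) ≠ ⊤ :=
      (lt_of_le_of_lt (measure_mono Set.inter_subset_right) (lt_top_iff_ne_top.mpr hfin)).ne
    have h3 : (⟪M.toFun (s ∩ S) u, v⟫_ℂ).re ≤ (μ (s ∩ S)).toReal * (‖u‖ * ‖v‖) := by
      have hb1 : (⟪M.toFun (s ∩ S) u, v⟫_ℂ).re ≤ ‖⟪M.toFun (s ∩ S) u, v⟫_ℂ‖ :=
        Complex.re_le_norm _
      have hb2 : ‖⟪M.toFun (s ∩ S) u, v⟫_ℂ‖ ≤ ‖M.toFun (s ∩ S) u‖ * ‖v‖ :=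
        norm_inner_le_norm _ _
      have hb3 : ‖M.toFun (s ∩ S) u‖ ≤ ‖M.toFun (s ∩ S)‖ * ‖u‖ :=
        (M.toFun (s ∩ S)).le_opNorm u
      have hb4 : ‖M.toFun (s ∩ S)‖ ≤ (μ (s ∩ S)).toReal :=
        M.norm_le hμ (hs.inter hS) hfin'
      have hu : (0:ℝ) ≤ ‖u‖ := norm_nonneg _
      have hv : (0:ℝ) ≤ ‖v‖ := norm_nonneg _
      calc (⟪M.toFun (s ∩ S) u, v⟫_ℂ).re ≤ ‖⟪M.toFun (s ∩ S) u, v⟫_ℂ‖ := hb1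
        _ ≤ ‖M.toFun (s ∩ S) u‖ * ‖v‖ := hb2
        _ ≤ (‖M.toFun (s ∩ S)‖ * ‖u‖) * ‖v‖ := mul_le_mul_of_nonneg_right hb3 hv
        _ ≤ ((μ (s ∩ S)).toReal * ‖u‖) * ‖v‖ :=
            mul_le_mul_of_nonneg_right (mul_le_mul_of_nonneg_right hb4 hu) hv
        _ = (μ (s ∩ S)).toReal * (‖u‖ * ‖v‖) := by ring
    have h4 : ∫ _ in s, (‖u‖ * ‖v‖) ∂(μ.restrict S) = (μ (s ∩ S)).toReal * (‖u‖ * ‖v‖) := by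
      rw [setIntegral_const, measureReal_def, Measure.restrict_apply hs, smul_eq_mul]
    rw [h4, h1, h2]
    linarith [h3]
  have := ae_nonneg_of_forall_setIntegral_nonneg hgint key
  filter_upwards [this] with t ht
  simp only [Pi.zero_apply] at ht
  linarith

end Povm2

section Core

variable {Ω : Type*} [MeasurableSpace Ω] {H : Type*} [NormedAddCommGroup H]
  [InnerProductSpace ℂ H] [CompleteSpace H]
  {M : POVM Ω H} {μ : Measure Ω} {Q : Ω → (H →ₗ[ℂ] H)}

private noncomputable def FA (Q : Ω → (H →ₗ[ℂ] H)) (u v x y : H) (α : ℝ) : Ω → ℂ :=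
  fun t => ⟪Q t (u + (α : ℂ) • x), v + (α : ℂ) • y⟫_ℂ

private lemma FA_expand (u v x y : H) (α : ℝ) (t : Ω) :
    FA Q u v x y α t = ⟪Q t u, v⟫_ℂ + (α : ℂ) * (⟪Q t x, v⟫_ℂ + ⟪Q t u, y⟫_ℂ)
      + (α : ℂ) ^ 2 * ⟪Q t x, y⟫_ℂ := by
  show ⟪Q t (u + (α : ℂ) • x), v + (α : ℂ) • y⟫_ℂ = _
  rw [LinearMap.map_add, LinearMap.map_smul]
  exact exp_inner α (Q t u) (Q t x) v y

lemma four_cases (b1 b2 b3 b4 : Prop) :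
    (¬b1 ∧ ¬b2) ∨ (¬b1 ∧ ¬b3) ∨ (¬b1 ∧ ¬b4) ∨ (¬b2 ∧ ¬b3) ∨ (¬b2 ∧ ¬b4) ∨ (¬b3 ∧ ¬b4)
    ∨ (b1 ∧ b2 ∧ b3) ∨ (b1 ∧ b2 ∧ b4) ∨ (b1 ∧ b3 ∧ b4) ∨ (b2 ∧ b3 ∧ b4) := by
  by_cases h1 : b1 <;> by_cases h2 : b2 <;> by_cases h3 : b3 <;> by_cases h4 : b4 <;> tauto

lemma cover4 {X : Type*} (S G1 G2 G3 G4 : Set X) :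
    S ⊆ ((((((S \ G1) ∩ (S \ G2)) ∪ ((S \ G1) ∩ (S \ G3))) ∪ (((S \ G1) ∩ (S \ G4)) ∪ ((S \ G2) ∩ (S \ G3)))) ∪ (((S \ G2) ∩ (S \ G4)) ∪ ((S \ G3) ∩ (S \ G4))))
      ∪ (((G1 ∩ (G2 ∩ G3)) ∪ (G1 ∩ (G2 ∩ G4))) ∪ ((G1 ∩ (G3 ∩ G4)) ∪ (G2 ∩ (G3 ∩ G4))))) := by
  intro t ht
  have h := four_cases (t ∈ G1) (t ∈ G2) (t ∈ G3) (t ∈ G4)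
  simp only [Set.mem_union, Set.mem_inter_iff, Set.mem_diff]
  rcases h with h|h|h|h|h|h|h|h|h|h
  · exact Or.inl (Or.inl (Or.inl (Or.inl ⟨⟨ht, h.1⟩, ht, h.2⟩)))
  · exact Or.inl (Or.inl (Or.inl (Or.inr ⟨⟨ht, h.1⟩, ht, h.2⟩)))
  · exact Or.inl (Or.inl (Or.inr (Or.inl ⟨⟨ht, h.1⟩, ht, h.2⟩)))
  · exact Or.inl (Or.inl (Or.inr (Or.inr ⟨⟨ht, h.1⟩, ht, h.2⟩)))
  · exact Or.inl (Or.inr (Or.inl ⟨⟨ht, h.1⟩, ht, h.2⟩))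
  · exact Or.inl (Or.inr (Or.inr ⟨⟨ht, h.1⟩, ht, h.2⟩))
  · exact Or.inr (Or.inl (Or.inl h))
  · exact Or.inr (Or.inl (Or.inr h))
  · exact Or.inr (Or.inr (Or.inl h))
  · exact Or.inr (Or.inr (Or.inr h))

set_option maxHeartbeats 1000000 in
/-- The per-positive-set core claim. -/
lemma perpos
    (hμ : ∀ E : Set Ω, MeasurableSet E → μ E = totalVar M.toFun E)
    (hQ : ∀ E : Set Ω, MeasurableSet E → ∀ x y : H,
      ⟪M.toFun E x, y⟫_ℂ = ∫ t in E, ⟪Q t x, y⟫_ℂ ∂μ)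
    (u v x y : H) {S : Set Ω} (hS : MeasurableSet S) (hSfin : μ S ≠ ⊤) (hSne : μ S ≠ 0)
    (hered : ∀ S', MeasurableSet S' → S' ⊆ S →
      IntegrableOn (fun t => ⟪Q t u, v⟫_ℂ) S' μ → μ S' = 0) :
    ∃ S₀, (MeasurableSet S₀ ∧ S₀ ⊆ S ∧
      ∀ S'', MeasurableSet S'' → S'' ⊆ S₀ → ⟪M.toFun S'' x, y⟫_ℂ = 0) ∧ μ S₀ ≠ 0 := by
  classical
  obtain ⟨T1, hT1m, hT1s, hT1i, hT1max⟩ := exists_integrable_exhaustion hS hSfin (FA Q u v x y 1)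
  obtain ⟨T2, hT2m, hT2s, hT2i, hT2max⟩ := exists_integrable_exhaustion hS hSfin (FA Q u v x y 2)
  obtain ⟨T3, hT3m, hT3s, hT3i, hT3max⟩ := exists_integrable_exhaustion hS hSfin (FA Q u v x y 3)
  obtain ⟨T4, hT4m, hT4s, hT4i, hT4max⟩ := exists_integrable_exhaustion hS hSfin (FA Q u v x y 4)
  set G1 := ⋃ k, T1 k with hG1
  set G2 := ⋃ k, T2 k with hG2
  set G3 := ⋃ k, T3 k with hG3
  set G4 := ⋃ k, T4 k with hG4
  set R1 := S \ G1 with hR1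
  set R2 := S \ G2 with hR2
  set R3 := S \ G3 with hR3
  set R4 := S \ G4 with hR4
  have hJ1 : ∀ S'', MeasurableSet S'' → S'' ⊆ R1 → IntegrableOn (FA Q u v x y 1) S'' μ → μ S'' = 0 :=
    fun S'' h hsub hint => hT1max S'' h (hsub.trans Set.diff_subset)
      (Set.disjoint_left.mpr fun t ht => (hsub ht).2) hint
  have hJ2 : ∀ S'', MeasurableSet S'' → S'' ⊆ R2 → IntegrableOn (FA Q u v x y 2) S'' μ → μ S'' = 0 :=
    fun S'' h hsub hint => hT2max S'' h (hsub.trans Set.diff_subset)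
      (Set.disjoint_left.mpr fun t ht => (hsub ht).2) hint
  have hJ3 : ∀ S'', MeasurableSet S'' → S'' ⊆ R3 → IntegrableOn (FA Q u v x y 3) S'' μ → μ S'' = 0 :=
    fun S'' h hsub hint => hT3max S'' h (hsub.trans Set.diff_subset)
      (Set.disjoint_left.mpr fun t ht => (hsub ht).2) hint
  have hJ4 : ∀ S'', MeasurableSet S'' → S'' ⊆ R4 → IntegrableOn (FA Q u v x y 4) S'' μ → μ S'' = 0 :=
    fun S'' h hsub hint => hT4max S'' h (hsub.trans Set.diff_subset)
      (Set.disjoint_left.mpr fun t ht => (hsub ht).2) hint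
  have PAIR : ∀ (α β : ℝ), (α:ℂ) ≠ 0 → (β:ℂ) ≠ 0 → (α:ℂ) ≠ (β:ℂ) →
      ∀ (W : Set Ω), MeasurableSet W → W ⊆ S →
      (∀ S'', MeasurableSet S'' → S'' ⊆ W → IntegrableOn (FA Q u v x y α) S'' μ → μ S'' = 0) →
      (∀ S'', MeasurableSet S'' → S'' ⊆ W → IntegrableOn (FA Q u v x y β) S'' μ → μ S'' = 0) →
      μ W ≠ 0 →
      ∃ S₀, (MeasurableSet S₀ ∧ S₀ ⊆ S ∧
        ∀ S'', MeasurableSet S'' → S'' ⊆ S₀ → ⟪M.toFun S'' x, y⟫_ℂ = 0) ∧ μ S₀ ≠ 0 := by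
    intro α β hα hβ hαβ W hWm hWS hJα hJβ hWne
    refine ⟨W, ⟨hWm, hWS, ?_⟩, hWne⟩
    intro S'' hS'' hsub
    have e0 : ⟪M.toFun S'' u, v⟫_ℂ = 0 :=
      junk_zero hQ hS'' u v (hered S'' hS'' (hsub.trans hWS))
    have eα : ⟪M.toFun S'' (u + (α:ℂ) • x), v + (α:ℂ) • y⟫_ℂ = 0 :=
      junk_zero hQ hS'' _ _ (hJα S'' hS'' hsub)
    have eβ : ⟪M.toFun S'' (u + (β:ℂ) • x), v + (β:ℂ) • y⟫_ℂ = 0 :=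
      junk_zero hQ hS'' _ _ (hJβ S'' hS'' hsub)
    rw [ContinuousLinearMap.map_add, ContinuousLinearMap.map_smul, exp_inner, e0, zero_add] at eα
    rw [ContinuousLinearMap.map_add, ContinuousLinearMap.map_smul, exp_inner, e0, zero_add] at eβ
    exact solve2 hα hβ hαβ eα eβ
  rcases eq_or_ne (μ (R1 ∩ R2)) 0 with h12 | h12
  swap
  · exact PAIR 1 2 (by norm_num) (by norm_num) (by exact_mod_cast (by norm_num : (1:ℝ) ≠ 2))
      (R1 ∩ R2) ((hS.diff (MeasurableSet.iUnion hT1m)).inter (hS.diff (MeasurableSet.iUnion hT2m)))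
      (Set.inter_subset_left.trans Set.diff_subset)
      (fun S'' h hsub hint => hJ1 S'' h (hsub.trans Set.inter_subset_left) hint)
      (fun S'' h hsub hint => hJ2 S'' h (hsub.trans Set.inter_subset_right) hint) h12
  rcases eq_or_ne (μ (R1 ∩ R3)) 0 with h13 | h13
  swap
  · exact PAIR 1 3 (by norm_num) (by norm_num) (by exact_mod_cast (by norm_num : (1:ℝ) ≠ 3))
      (R1 ∩ R3) ((hS.diff (MeasurableSet.iUnion hT1m)).inter (hS.diff (MeasurableSet.iUnion hT3m)))
      (Set.inter_subset_left.trans Set.diff_subset)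
      (fun S'' h hsub hint => hJ1 S'' h (hsub.trans Set.inter_subset_left) hint)
      (fun S'' h hsub hint => hJ3 S'' h (hsub.trans Set.inter_subset_right) hint) h13
  rcases eq_or_ne (μ (R1 ∩ R4)) 0 with h14 | h14
  swap
  · exact PAIR 1 4 (by norm_num) (by norm_num) (by exact_mod_cast (by norm_num : (1:ℝ) ≠ 4))
      (R1 ∩ R4) ((hS.diff (MeasurableSet.iUnion hT1m)).inter (hS.diff (MeasurableSet.iUnion hT4m)))
      (Set.inter_subset_left.trans Set.diff_subset)
      (fun S'' h hsub hint => hJ1 S'' h (hsub.trans Set.inter_subset_left) hint)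
      (fun S'' h hsub hint => hJ4 S'' h (hsub.trans Set.inter_subset_right) hint) h14
  rcases eq_or_ne (μ (R2 ∩ R3)) 0 with h23 | h23
  swap
  · exact PAIR 2 3 (by norm_num) (by norm_num) (by exact_mod_cast (by norm_num : (2:ℝ) ≠ 3))
      (R2 ∩ R3) ((hS.diff (MeasurableSet.iUnion hT2m)).inter (hS.diff (MeasurableSet.iUnion hT3m)))
      (Set.inter_subset_left.trans Set.diff_subset)
      (fun S'' h hsub hint => hJ2 S'' h (hsub.trans Set.inter_subset_left) hint)
      (fun S'' h hsub hint => hJ3 S'' h (hsub.trans Set.inter_subset_right) hint) h23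
  rcases eq_or_ne (μ (R2 ∩ R4)) 0 with h24 | h24
  swap
  · exact PAIR 2 4 (by norm_num) (by norm_num) (by exact_mod_cast (by norm_num : (2:ℝ) ≠ 4))
      (R2 ∩ R4) ((hS.diff (MeasurableSet.iUnion hT2m)).inter (hS.diff (MeasurableSet.iUnion hT4m)))
      (Set.inter_subset_left.trans Set.diff_subset)
      (fun S'' h hsub hint => hJ2 S'' h (hsub.trans Set.inter_subset_left) hint)
      (fun S'' h hsub hint => hJ4 S'' h (hsub.trans Set.inter_subset_right) hint) h24
  rcases eq_or_ne (μ (R3 ∩ R4)) 0 with h34 | h34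
  swap
  · exact PAIR 3 4 (by norm_num) (by norm_num) (by exact_mod_cast (by norm_num : (3:ℝ) ≠ 4))
      (R3 ∩ R4) ((hS.diff (MeasurableSet.iUnion hT3m)).inter (hS.diff (MeasurableSet.iUnion hT4m)))
      (Set.inter_subset_left.trans Set.diff_subset)
      (fun S'' h hsub hint => hJ3 S'' h (hsub.trans Set.inter_subset_left) hint)
      (fun S'' h hsub hint => hJ4 S'' h (hsub.trans Set.inter_subset_right) hint) h34
  -- all pairwise intersections of the bad sets are null: contradiction
  exfalso
  have TRI : ∀ (a b c : ℝ), (a:ℂ) ≠ (b:ℂ) → (a:ℂ) ≠ (c:ℂ) → (b:ℂ) ≠ (c:ℂ) →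
      ∀ (Ta Tb Tc : ℕ → Set Ω), (∀ k, MeasurableSet (Ta k)) →
      (∀ k, MeasurableSet (Tb k)) → (∀ k, MeasurableSet (Tc k)) →
      (∀ k, Ta k ⊆ S) →
      (∀ k, IntegrableOn (FA Q u v x y a) (Ta k) μ) →
      (∀ k, IntegrableOn (FA Q u v x y b) (Tb k) μ) →
      (∀ k, IntegrableOn (FA Q u v x y c) (Tc k) μ) →
      μ ((⋃ k, Ta k) ∩ ((⋃ k, Tb k) ∩ (⋃ k, Tc k))) = 0 := by
    intro a b c hab hac hbc Ta Tb Tc hTam hTbm hTcm hTaS hia hib hic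
    have cover : (⋃ k, Ta k) ∩ ((⋃ k, Tb k) ∩ (⋃ k, Tc k)) ⊆
        ⋃ (p : ℕ × ℕ × ℕ), (Ta p.1 ∩ (Tb p.2.1 ∩ Tc p.2.2)) := by
      rintro t ⟨⟨Wa, ⟨ka, rfl⟩, hka⟩, ⟨Wb, ⟨kb, rfl⟩, hkb⟩, ⟨Wc, ⟨kc, rfl⟩, hkc⟩⟩
      exact Set.mem_iUnion.mpr ⟨⟨ka, kb, kc⟩, hka, hkb, hkc⟩
    refine measure_mono_null cover (measure_iUnion_null fun p => ?_)
    have hfa : IntegrableOn (FA Q u v x y a) (Ta p.1 ∩ (Tb p.2.1 ∩ Tc p.2.2)) μ :=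
      (hia p.1).mono_set Set.inter_subset_left
    have hfb : IntegrableOn (FA Q u v x y b) (Ta p.1 ∩ (Tb p.2.1 ∩ Tc p.2.2)) μ :=
      (hib p.2.1).mono_set (Set.inter_subset_right.trans Set.inter_subset_left)
    have hfc : IntegrableOn (FA Q u v x y c) (Ta p.1 ∩ (Tb p.2.1 ∩ Tc p.2.2)) μ :=
      (hic p.2.2).mono_set (Set.inter_subset_right.trans Set.inter_subset_right)
    have hkey : IntegrableOn (fun t => ⟪Q t u, v⟫_ℂ) (Ta p.1 ∩ (Tb p.2.1 ∩ Tc p.2.2)) μ := by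
      have heq : (fun t => ⟪Q t u, v⟫_ℂ) = fun t =>
          ((b:ℂ) * (c:ℂ) / (((a:ℂ) - (b:ℂ)) * ((a:ℂ) - (c:ℂ)))) * FA Q u v x y a t
          + ((a:ℂ) * (c:ℂ) / (((b:ℂ) - (a:ℂ)) * ((b:ℂ) - (c:ℂ)))) * FA Q u v x y b t
          + ((a:ℂ) * (b:ℂ) / (((c:ℂ) - (a:ℂ)) * ((c:ℂ) - (b:ℂ)))) * FA Q u v x y c t := by
        funext t
        rw [FA_expand, FA_expand, FA_expand]
        exact lagrange0 hab hac hbc _ _ _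
      rw [heq]
      exact ((hfa.const_mul _).add (hfb.const_mul _)).add (hfc.const_mul _)
    exact hered _ ((hTam p.1).inter ((hTbm p.2.1).inter (hTcm p.2.2)))
      (Set.inter_subset_left.trans (hTaS p.1)) hkey
  have cast12 : ((1:ℝ):ℂ) ≠ ((2:ℝ):ℂ) := by exact_mod_cast (by norm_num : (1:ℝ) ≠ 2)
  have cast13 : ((1:ℝ):ℂ) ≠ ((3:ℝ):ℂ) := by exact_mod_cast (by norm_num : (1:ℝ) ≠ 3)
  have cast14 : ((1:ℝ):ℂ) ≠ ((4:ℝ):ℂ) := by exact_mod_cast (by norm_num : (1:ℝ) ≠ 4)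
  have cast23 : ((2:ℝ):ℂ) ≠ ((3:ℝ):ℂ) := by exact_mod_cast (by norm_num : (2:ℝ) ≠ 3)
  have cast24 : ((2:ℝ):ℂ) ≠ ((4:ℝ):ℂ) := by exact_mod_cast (by norm_num : (2:ℝ) ≠ 4)
  have cast34 : ((3:ℝ):ℂ) ≠ ((4:ℝ):ℂ) := by exact_mod_cast (by norm_num : (3:ℝ) ≠ 4)
  have t123 : μ (G1 ∩ (G2 ∩ G3)) = 0 := TRI 1 2 3 cast12 cast13 cast23 T1 T2 T3 hT1m hT2m hT3m hT1s hT1i hT2i hT3i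
  have t124 : μ (G1 ∩ (G2 ∩ G4)) = 0 := TRI 1 2 4 cast12 cast14 cast24 T1 T2 T4 hT1m hT2m hT4m hT1s hT1i hT2i hT4i
  have t134 : μ (G1 ∩ (G3 ∩ G4)) = 0 := TRI 1 3 4 cast13 cast14 cast34 T1 T3 T4 hT1m hT3m hT4m hT1s hT1i hT3i hT4i
  have t234 : μ (G2 ∩ (G3 ∩ G4)) = 0 := TRI 2 3 4 cast23 cast24 cast34 T2 T3 T4 hT2m hT3m hT4m hT2s hT2i hT3i hT4i
  have hScover : S ⊆ ((((((R1 ∩ R2) ∪ (R1 ∩ R3)) ∪ ((R1 ∩ R4) ∪ (R2 ∩ R3))) ∪ ((R2 ∩ R4) ∪ (R3 ∩ R4)))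
      ∪ (((G1 ∩ (G2 ∩ G3)) ∪ (G1 ∩ (G2 ∩ G4))) ∪ ((G1 ∩ (G3 ∩ G4)) ∪ (G2 ∩ (G3 ∩ G4)))))) :=
    cover4 S G1 G2 G3 G4
  exact hSne (measure_mono_null hScover
    (measure_union_null
      (measure_union_null
        (measure_union_null (measure_union_null h12 h13) (measure_union_null h14 h23))
        (measure_union_null h24 h34))
      (measure_union_null (measure_union_null t123 t124) (measure_union_null t134 t234))))

end Core

section Core2

variable {Ω : Type*} [MeasurableSpace Ω] {H : Type*} [NormedAddCommGroup H]
  [InnerProductSpace ℂ H] [CompleteSpace H]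
  {M : POVM Ω H} {μ : Measure Ω} {Q : Ω → (H →ₗ[ℂ] H)}

/-- The remainder set, on which the integrand is nowhere integrable, is null. -/
lemma core_null
    (hμ : ∀ E : Set Ω, MeasurableSet E → μ E = totalVar M.toFun E)
    (hQ : ∀ E : Set Ω, MeasurableSet E → ∀ x y : H,
      ⟪M.toFun E x, y⟫_ℂ = ∫ t in E, ⟪Q t x, y⟫_ℂ ∂μ)
    (u v : H) {S : Set Ω} (hS : MeasurableSet S) (hSfin : μ S ≠ ⊤)
    (hered : ∀ S', MeasurableSet S' → S' ⊆ S →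
      IntegrableOn (fun t => ⟪Q t u, v⟫_ℂ) S' μ → μ S' = 0) :
    μ S = 0 := by
  have inner_zero : ∀ x y : H, ∀ W, MeasurableSet W → W ⊆ S → ⟪M.toFun W x, y⟫_ℂ = 0 := by
    intro x y
    set P : Set Ω → Prop := fun S₀ => MeasurableSet S₀ ∧ S₀ ⊆ S ∧
      ∀ S'', MeasurableSet S'' → S'' ⊆ S₀ → ⟪M.toFun S'' x, y⟫_ℂ = 0 with hP
    have hPempty : P ∅ := by
      refine ⟨MeasurableSet.empty, Set.empty_subset S, fun S'' _ hsub => ?_⟩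
      rw [Set.subset_empty_iff.mp hsub]
      simp [M.empty]
    have hPunion : ∀ U : ℕ → Set Ω, (∀ k, P (U k)) → P (⋃ k, U k) := by
      intro U hU
      refine ⟨MeasurableSet.iUnion fun k => (hU k).1,
        Set.iUnion_subset fun k => (hU k).2.1, ?_⟩
      intro S'' hS'' hsub
      set V : ℕ → Set Ω := fun k => S'' ∩ disjointed U k with hV
      have hVm : ∀ k, MeasurableSet (V k) :=
        fun k => hS''.inter (MeasurableSet.disjointed (fun i => (hU i).1) k)
      have hVd : Pairwise (Function.onFun Disjoint V) := fun i j hij =>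
        ((disjoint_disjointed U) hij).mono Set.inter_subset_right Set.inter_subset_right
      have hVU : (⋃ k, V k) = S'' := by
        rw [hV, ← Set.inter_iUnion, iUnion_disjointed]
        exact Set.inter_eq_self_of_subset_left hsub
      have hsum := M.weakly_additive V hVm hVd x y
      rw [hVU] at hsum
      have hz : ∀ k, ⟪M.toFun (V k) x, y⟫_ℂ = 0 := fun k =>
        (hU k).2.2 (V k) (hVm k)
          (Set.inter_subset_right.trans (disjointed_subset U k))
      have hsum0 : HasSum (fun k => ⟪M.toFun (V k) x, y⟫_ℂ) 0 := by
        have : (fun k => ⟪M.toFun (V k) x, y⟫_ℂ) = fun _ => (0:ℂ) := funext hz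
        rw [this]
        exact hasSum_zero
      exact hsum.unique hsum0
    have hpos : ∀ S', MeasurableSet S' → S' ⊆ S → μ S' ≠ 0 →
        ∃ S₀, P S₀ ∧ S₀ ⊆ S' ∧ μ S₀ ≠ 0 := by
      intro S' hS' hsub hne
      have hfin' : μ S' ≠ ⊤ :=
        (lt_of_le_of_lt (measure_mono hsub) (lt_top_iff_ne_top.mpr hSfin)).ne
      have hered' : ∀ S'', MeasurableSet S'' → S'' ⊆ S' →
          IntegrableOn (fun t => ⟪Q t u, v⟫_ℂ) S'' μ → μ S'' = 0 :=
        fun S'' h hs hi => hered S'' h (hs.trans hsub) hi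
      obtain ⟨S₀, ⟨h1, h2, h3⟩, h4⟩ := perpos hμ hQ u v x y hS' hfin' hne hered'
      exact ⟨S₀, ⟨h1, h2.trans hsub, h3⟩, h2, h4⟩
    obtain ⟨U, hPU, hnull⟩ := exhaust hS hSfin P (fun _ h => h.1) (fun _ h => h.2.1)
      hPempty hPunion hpos
    intro W hW hWS
    have hUm : MeasurableSet U := hPU.1
    have hdisj : Disjoint (W ∩ U) (W \ U) :=
      Set.disjoint_sdiff_right.mono_left Set.inter_subset_right
    have hsplit : W = (W ∩ U) ∪ (W \ U) := (Set.inter_union_diff W U).symm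
    rw [hsplit, M.sadd (hW.inter hUm) (hW.diff hUm) hdisj]
    have hz1 := hPU.2.2 (W ∩ U) (hW.inter hUm) Set.inter_subset_right
    have hz2 : M.toFun (W \ U) = 0 :=
      M.zero_of_null hμ (hW.diff hUm)
        (measure_mono_null (Set.diff_subset_diff_left hWS) hnull)
    rw [hz1, hz2]
    simp
  have hMW : ∀ W, MeasurableSet W → W ⊆ S → M.toFun W = 0 := by
    intro W hW hWS
    ext z
    refine ext_inner_right ℂ fun w => ?_
    rw [inner_zero z w W hW hWS]
    simp
  rw [hμ S hS]
  refine le_antisymm (iSup_le fun F => ?_) zero_le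
  have hz : ∀ i, M.toFun (F.1 i) = 0 := by
    intro i
    refine hMW _ (F.2.1 i) ?_
    have hsub := Set.subset_iUnion F.1 i
    rwa [F.2.2.2] at hsub
  simp [hz]

end Core2

section Assembly

variable {Ω : Type*} [MeasurableSpace Ω] {H : Type*} [NormedAddCommGroup H]
  [InnerProductSpace ℂ H] [CompleteSpace H]
  {M : POVM Ω H} {μ : Measure Ω} {Q : Ω → (H →ₗ[ℂ] H)}

lemma ae_bound_pair
    (hμ : ∀ E : Set Ω, MeasurableSet E → μ E = totalVar M.toFun E)
    (hQ : ∀ E : Set Ω, MeasurableSet E → ∀ x y : H,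
      ⟪M.toFun E x, y⟫_ℂ = ∫ t in E, ⟪Q t x, y⟫_ℂ ∂μ)
    {E : Set Ω} (hE : MeasurableSet E) (hEfin : μ E ≠ ⊤) (u v : H) :
    μ ({t | ¬ (⟪Q t u, v⟫_ℂ).re ≤ ‖u‖ * ‖v‖} ∩ E) = 0 := by
  obtain ⟨T, hTm, hTs, hTi, hTmax⟩ :=
    exists_integrable_exhaustion hE hEfin (fun t => ⟪Q t u, v⟫_ℂ)
  set N := {t | ¬ (⟪Q t u, v⟫_ℂ).re ≤ ‖u‖ * ‖v‖} with hN
  have hRnull : μ (E \ ⋃ k, T k) = 0 := by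
    refine core_null hμ hQ u v (hE.diff (MeasurableSet.iUnion hTm)) ?_ ?_
    · exact (lt_of_le_of_lt (measure_mono Set.diff_subset) (lt_top_iff_ne_top.mpr hEfin)).ne
    · intro S' h hsub hint
      exact hTmax S' h (hsub.trans Set.diff_subset)
        (Set.disjoint_left.mpr fun t ht => (hsub ht).2) hint
  have hTk : ∀ k, μ (N ∩ T k) = 0 := by
    intro k
    have hfin : μ (T k) ≠ ⊤ :=
      (lt_of_le_of_lt (measure_mono (hTs k)) (lt_top_iff_ne_top.mpr hEfin)).ne
    have h := good_bound hμ hQ (hTm k) hfin u v (hTi k)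
    rw [ae_iff] at h
    rwa [Measure.restrict_apply' (hTm k)] at h
  have hcov : N ∩ E ⊆ (⋃ k, N ∩ T k) ∪ (E \ ⋃ k, T k) := by
    rintro t ⟨htN, htE⟩
    by_cases h : t ∈ ⋃ k, T k
    · obtain ⟨k, hk⟩ := Set.mem_iUnion.mp h
      exact Or.inl (Set.mem_iUnion.mpr ⟨k, htN, hk⟩)
    · exact Or.inr ⟨htE, h⟩
  exact measure_mono_null hcov (measure_union_null (measure_iUnion_null hTk) hRnull)

end Assembly

theorem povm_sigma_finite_corollary'
    {Ω : Type*} [MeasurableSpace Ω]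
    {H : Type*} [NormedAddCommGroup H] [InnerProductSpace ℂ H] [CompleteSpace H]
    [TopologicalSpace.SeparableSpace H]
    (M : POVM Ω H)
    (hσfin : ∃ c : ℕ → Set Ω, (∀ n, MeasurableSet (c n)) ∧ (⋃ n, c n) = Set.univ ∧
      ∀ n, totalVar M.toFun (c n) < ⊤)
    (μ : Measure Ω) (hμ : ∀ E : Set Ω, MeasurableSet E → μ E = totalVar M.toFun E)
    (Q : Ω → (H →ₗ[ℂ] H))
    (hQclosed : ∀ t, IsClosed {p : H × H | p.2 = Q t p.1})
    (hQ : ∀ E : Set Ω, MeasurableSet E → ∀ x y : H,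
      ⟪M.toFun E x, y⟫_ℂ = ∫ t in E, ⟪Q t x, y⟫_ℂ ∂μ) :
    (∀ x : H, ∃ c : ℕ → Set Ω, (∀ n, MeasurableSet (c n)) ∧ (⋃ n, c n) = Set.univ ∧
      ∀ n, totalVar (fun E => M.toFun E x) (c n) < ⊤) ∧
    ∀ᵐ t ∂μ, ∀ x : H, ‖Q t x‖ ≤ ‖x‖ := by
  obtain ⟨c, hc1, hc2, hc3⟩ := hσfin
  constructor
  · intro x
    refine ⟨c, hc1, hc2, fun n => ?_⟩
    have hb : totalVar (fun E => M.toFun E x) (c n)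
        ≤ (‖x‖₊ : ℝ≥0∞) * totalVar M.toFun (c n) := by
      refine iSup_le fun F => ?_
      calc ∑' i, (‖M.toFun (F.1 i) x‖₊ : ℝ≥0∞)
          ≤ ∑' i, (‖x‖₊ : ℝ≥0∞) * (‖M.toFun (F.1 i)‖₊ : ℝ≥0∞) := by
            refine ENNReal.tsum_le_tsum fun i => ?_
            have h1 := (M.toFun (F.1 i)).le_opNNNorm x
            have h2 : (‖M.toFun (F.1 i) x‖₊ : ℝ≥0∞)
                ≤ (‖M.toFun (F.1 i)‖₊ : ℝ≥0∞) * (‖x‖₊ : ℝ≥0∞) := by exact_mod_cast h1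
            rwa [mul_comm] at h2
        _ = (‖x‖₊ : ℝ≥0∞) * ∑' i, (‖M.toFun (F.1 i)‖₊ : ℝ≥0∞) := ENNReal.tsum_mul_left
        _ ≤ (‖x‖₊ : ℝ≥0∞) * totalVar M.toFun (c n) :=
            mul_le_mul_right (tsum_le_totalVar M.toFun F.1 F.2) _
    exact lt_of_le_of_lt hb (ENNReal.mul_lt_top ENNReal.coe_lt_top (hc3 n))
  · have hcnull : ∀ (u v : H), μ {t | ¬ (⟪Q t u, v⟫_ℂ).re ≤ ‖u‖ * ‖v‖} = 0 := by
      intro u v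
      have heq : {t | ¬ (⟪Q t u, v⟫_ℂ).re ≤ ‖u‖ * ‖v‖}
          = ⋃ n, ({t | ¬ (⟪Q t u, v⟫_ℂ).re ≤ ‖u‖ * ‖v‖} ∩ c n) := by
        rw [← Set.inter_iUnion, hc2, Set.inter_univ]
      rw [heq]
      refine measure_iUnion_null fun n => ae_bound_pair hμ hQ (hc1 n) ?_ u v
      rw [hμ _ (hc1 n)]
      exact (hc3 n).ne
    obtain ⟨D, hDc, hDd⟩ := TopologicalSpace.exists_countable_dense H
    have hae : ∀ᵐ t ∂μ, ∀ u ∈ D, ∀ v ∈ D, (⟪Q t u, v⟫_ℂ).re ≤ ‖u‖ * ‖v‖ := by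
      rw [ae_ball_iff hDc]
      intro u hu
      rw [ae_ball_iff hDc]
      intro v hv
      rw [ae_iff]
      exact hcnull u v
    filter_upwards [hae] with t ht
    have hcont : Continuous (Q t) := by
      refine (Q t).continuous_of_isClosed_graph ?_
      have hgr : ((Q t).graph : Set (H × H)) = {p : H × H | p.2 = Q t p.1} :=
        Set.ext fun p => by simp [LinearMap.mem_graph_iff]
      rw [hgr]
      exact hQclosed t
    have step1 : ∀ v' ∈ D, ∀ z : H, (⟪Q t z, v'⟫_ℂ).re ≤ ‖z‖ * ‖v'‖ := by
      intro v' hv' z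
      have hclosed : IsClosed {z : H | (⟪Q t z, v'⟫_ℂ).re ≤ ‖z‖ * ‖v'‖} :=
        isClosed_le (Complex.continuous_re.comp (hcont.inner continuous_const))
          (continuous_norm.mul continuous_const)
      have hDsub : D ⊆ {z : H | (⟪Q t z, v'⟫_ℂ).re ≤ ‖z‖ * ‖v'‖} :=
        fun u' hu' => ht u' hu' v' hv'
      exact (hclosed.closure_subset_iff.mpr hDsub) (hDd z)
    intro x
    by_cases hw : Q t x = 0
    · rw [hw]; simpa using norm_nonneg x
    have hq : 0 < ‖Q t x‖ := norm_pos_iff.mpr hw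
    have hkey : ∀ ε > (0:ℝ), ‖Q t x‖ ^ 2 ≤ ‖x‖ * ‖Q t x‖ + ε * (‖x‖ + ‖Q t x‖) := by
      intro ε hε
      obtain ⟨v', hv'⟩ := Metric.dense_iff.mp hDd (Q t x) ε hε
      have hv'D : v' ∈ D := hv'.2
      have hdist : ‖v' - Q t x‖ < ε := by
        have := hv'.1
        rwa [Metric.mem_ball, dist_eq_norm] at this
      have h1 : (⟪Q t x, v'⟫_ℂ).re ≤ ‖x‖ * ‖v'‖ := step1 v' hv'D x
      have h2 : (⟪Q t x, Q t x⟫_ℂ).re = ‖Q t x‖ ^ 2 := by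
        rw [← RCLike.re_eq_complex_re]
        exact inner_self_eq_norm_sq (𝕜 := ℂ) (Q t x)
      have h3 : ⟪Q t x, Q t x⟫_ℂ + ⟪Q t x, v' - Q t x⟫_ℂ = ⟪Q t x, v'⟫_ℂ := by
        rw [← inner_add_right, add_sub_cancel]
      have h4 : -(‖Q t x‖ * ε) ≤ (⟪Q t x, v' - Q t x⟫_ℂ).re := by
        have hb1 : |(⟪Q t x, v' - Q t x⟫_ℂ).re| ≤ ‖⟪Q t x, v' - Q t x⟫_ℂ‖ := by
          exact Complex.abs_re_le_norm _
        have hb2 : ‖⟪Q t x, v' - Q t x⟫_ℂ‖ ≤ ‖Q t x‖ * ‖v' - Q t x‖ := norm_inner_le_norm _ _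
        have hb3 : ‖Q t x‖ * ‖v' - Q t x‖ ≤ ‖Q t x‖ * ε :=
          mul_le_mul_of_nonneg_left hdist.le (norm_nonneg _)
        have := abs_le.mp (hb1.trans (hb2.trans hb3))
        linarith [this.1]
      have h5 : ‖v'‖ ≤ ‖Q t x‖ + ε := by
        calc ‖v'‖ = ‖Q t x + (v' - Q t x)‖ := by rw [add_sub_cancel]
          _ ≤ ‖Q t x‖ + ‖v' - Q t x‖ := norm_add_le _ _
          _ ≤ ‖Q t x‖ + ε := by linarith
      have h6 : (⟪Q t x, Q t x⟫_ℂ).re + (⟪Q t x, v' - Q t x⟫_ℂ).re = (⟪Q t x, v'⟫_ℂ).re := by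
        rw [← Complex.add_re, h3]
      nlinarith [norm_nonneg x]
    have h7 : ‖Q t x‖ ^ 2 ≤ ‖x‖ * ‖Q t x‖ := by
      by_contra hlt
      push_neg at hlt
      set δ := ‖Q t x‖ ^ 2 - ‖x‖ * ‖Q t x‖ with hδ
      have hδpos : 0 < δ := by simp [hδ]; linarith
      have hspos : 0 < ‖x‖ + ‖Q t x‖ := by positivity
      have hε := hkey (δ / (2 * (‖x‖ + ‖Q t x‖))) (by positivity)
      have hcomp : δ / (2 * (‖x‖ + ‖Q t x‖)) * (‖x‖ + ‖Q t x‖) = δ / 2 := by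
        field_simp
      rw [hcomp] at hε
      simp only [hδ] at hε
      linarith
    nlinarith [h7, hq]

/-- If the operator-norm total variation of a POVM `M` is σ-finite, then for every
`x ∈ H` the vector measure `E ↦ M(E)x` has σ-finite total variation, and in any
Radon–Nikodym decomposition of `M` (by closed operators `Q(t)` defined on all of `H`)
with respect to the operator-norm total-variation measure `μ` of `M`, the operators
`Q(t)` are bounded with `‖Q(t)‖ ≤ 1` for `μ`-a.e. `t`. -/
theorem povm_sigma_finite_corollary
    {Ω : Type*} [MeasurableSpace Ω]
    {H : Type*} [NormedAddCommGroup H] [InnerProductSpace ℂ H] [CompleteSpace H]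
    [TopologicalSpace.SeparableSpace H]
    (M : POVM Ω H)
    (hσfin : ∃ c : ℕ → Set Ω, (∀ n, MeasurableSet (c n)) ∧ (⋃ n, c n) = Set.univ ∧
      ∀ n, totalVar M.toFun (c n) < ⊤)
    (μ : Measure Ω) (hμ : ∀ E : Set Ω, MeasurableSet E → μ E = totalVar M.toFun E)
    (Q : Ω → (H →ₗ[ℂ] H))
    (hQclosed : ∀ t, IsClosed {p : H × H | p.2 = Q t p.1})
    (hQ : ∀ E : Set Ω, MeasurableSet E → ∀ x y : H,
      ⟪M.toFun E x, y⟫_ℂ = ∫ t in E, ⟪Q t x, y⟫_ℂ ∂μ) :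
    (∀ x : H, ∃ c : ℕ → Set Ω, (∀ n, MeasurableSet (c n)) ∧ (⋃ n, c n) = Set.univ ∧
      ∀ n, totalVar (fun E => M.toFun E x) (c n) < ⊤) ∧
    ∀ᵐ t ∂μ, ∀ x : H, ‖Q t x‖ ≤ ‖x‖ :=
  povm_sigma_finite_corollary' M hσfin μ hμ Q hQclosed hQ
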